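/- Let L and M be FDD-lattices and f : L → M a bounded lattice homomorphism. Then the map pt(f) : pt(M) → pt(L) defined by pt(f)(p) = p ∘ f is a spectral map between the Lawson compact algebraic L-domains pt(M) and pt(L): for every compact-open subset U of pt(L) (with the Scott topology), pt(f)⁻¹(U) is a compact-open subset of pt(M). -/

import Mathlib

section Domains

variable (P : Type*) [PartialOrder P]

/-- A dcpo: every nonempty directed subset has a least upper bound. -/
def DirectedComplete : Prop :=
  ∀ D : Set P, D.Nonempty → DirectedOn (· ≤ ·) D → ∃ s, IsLUB D s

variable {P}

/-- A compact (finite) element of a poset. -/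
def IsCompactElt (k : P) : Prop :=
  ∀ D : Set P, D.Nonempty → DirectedOn (· ≤ ·) D → ∀ s : P, IsLUB D s → k ≤ s →
    ∃ d ∈ D, k ≤ d

/-- A Scott-open subset: an upper set inaccessible by directed suprema. -/
def ScottOpen (U : Set P) : Prop :=
  IsUpperSet U ∧ ∀ D : Set P, D.Nonempty → DirectedOn (· ≤ ·) D → ∀ s : P, IsLUB D s →
    s ∈ U → (D ∩ U).Nonempty

/-- Compactness of a set with respect to covers by Scott-open sets. -/
def ScottCompactSet (K : Set P) : Prop :=
  ∀ C : Set (Set P), (∀ V ∈ C, ScottOpen V) → K ⊆ ⋃₀ C →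
    ∃ F : Finset (Set P), ↑F ⊆ C ∧ K ⊆ ⋃₀ (F : Set (Set P))

variable (P)

/-- The collection of compact-open subsets (w.r.t. the Scott topology). -/
def CO : Set (Set P) := {U | ScottOpen U ∧ ScottCompactSet U}

/-- An algebraic domain: a dcpo in which, for every `x`, the set of compact elements
below `x` is a (nonempty) directed set with least upper bound `x`. -/
def IsAlgebraicDomain : Prop :=
  DirectedComplete P ∧
  ∀ x : P,
    (Set.Iic x ∩ {k | IsCompactElt k}).Nonempty ∧
    DirectedOn (· ≤ ·) (Set.Iic x ∩ {k | IsCompactElt k}) ∧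
    IsLUB (Set.Iic x ∩ {k | IsCompactElt k}) x

/-- Every principal ideal `↓x` is a complete lattice in the induced order
(equivalently: every subset of `↓x` has a least upper bound inside `↓x`). -/
def PrincipalIdealsComplete : Prop :=
  ∀ x : P, ∀ S : Set P, S ⊆ Set.Iic x →
    ∃ s, s ≤ x ∧ (∀ a ∈ S, a ≤ s) ∧ ∀ u, u ≤ x → (∀ a ∈ S, a ≤ u) → s ≤ u

/-- An algebraic L-domain. -/
def IsAlgebraicLDomain : Prop := IsAlgebraicDomain P ∧ PrincipalIdealsComplete P

/-- The Lawson topology: generated by the Scott-open sets together with complements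
of principal filters. -/
def lawsonTopology : TopologicalSpace P :=
  TopologicalSpace.generateFrom ({U | ScottOpen U} ∪ {U | ∃ x : P, U = (Set.Ici x)ᶜ})

/-- Lawson compactness: compactness in the Lawson topology. -/
def LawsonCompact : Prop := @CompactSpace P (lawsonTopology P)

end Domains

section FDD

variable {L : Type*} [Lattice L] [BoundedOrder L]

/-- A nonzero co-prime element. -/
def CoprimeElt (a : L) : Prop :=
  a ≠ ⊥ ∧ ∀ x y : L, a ≤ x ⊔ y → a ≤ x ∨ a ≤ y

/-- A finitely disjunctive distributive lattice (FDD-lattice): a bounded distributive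
lattice in which (1) every element is a finite join of nonzero co-primes, and
(2) the meet of two nonzero co-primes is a finite join of pairwise disjoint
nonzero co-primes. -/
def IsFDD (L : Type*) [DistribLattice L] [BoundedOrder L] : Prop :=
  (∀ x : L, ∃ F : Finset L, (∀ a ∈ F, CoprimeElt a) ∧ x = F.sup id) ∧
  (∀ a b : L, CoprimeElt a → CoprimeElt b →
    ∃ F : Finset L, (∀ c ∈ F, CoprimeElt c) ∧
      (∀ c ∈ F, ∀ d ∈ F, c ≠ d → c ⊓ d = ⊥) ∧ a ⊓ b = F.sup id)

/-- A point of a bounded lattice: a lattice homomorphism into the two-element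
bounded lattice `Bool` preserving `0`, `1`, binary meets and binary joins. -/
def IsPoint (p : L → Bool) : Prop :=
  p ⊥ = false ∧ p ⊤ = true ∧
  (∀ x y : L, p (x ⊓ y) = (p x && p y)) ∧
  (∀ x y : L, p (x ⊔ y) = (p x || p y))

end FDD

/-- The poset of points of a bounded lattice, with the pointwise order. -/
def Pt (L : Type*) [Lattice L] [BoundedOrder L] : Type _ :=
  {p : L → Bool // IsPoint p}

noncomputable instance (L : Type*) [Lattice L] [BoundedOrder L] : PartialOrder (Pt L) :=
  inferInstanceAs (PartialOrder {p : L → Bool // IsPoint p})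

/-- `γ_a : L → {0,1}`, `γ_a x = 1` iff `a ≤ x`. -/
noncomputable def gammaPt {L : Type*} [Lattice L] [BoundedOrder L] (a : L) : L → Bool :=
  fun x => @decide (a ≤ x) (Classical.propDecidable _)

/-- A bounded lattice homomorphism. -/
def IsBLH {L M : Type*} [Lattice L] [BoundedOrder L] [Lattice M] [BoundedOrder M]
    (f : L → M) : Prop :=
  f ⊥ = ⊥ ∧ f ⊤ = ⊤ ∧ (∀ x y, f (x ⊓ y) = f x ⊓ f y) ∧ (∀ x y, f (x ⊔ y) = f x ⊔ f y)

section Helpers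

variable {L : Type*} [Lattice L] [BoundedOrder L]

lemma pt_le_iff (p q : Pt L) : p ≤ q ↔ ∀ x, p.1 x = true → q.1 x = true := by
  constructor
  · intro h x hx
    have h2 : p.1 x ≤ q.1 x := h x
    rw [hx] at h2
    exact Bool.le_iff_imp.mp h2 rfl
  · intro h x
    exact Bool.le_iff_imp.mpr (fun hx => h x hx)

lemma point_mono {p : L → Bool} (hp : IsPoint p) {x y : L} (h : x ≤ y)
    (hx : p x = true) : p y = true := by
  have : x ⊓ y = x := inf_eq_left.mpr h
  have h2 := hp.2.2.1 x y
  rw [this, hx] at h2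
  exact (Bool.and_eq_true _ _).mp h2.symm |>.2

lemma point_sup_finset {p : L → Bool} (hp : IsPoint p) (F : Finset L) :
    p (F.sup id) = true ↔ ∃ b ∈ F, p b = true := by
  classical
  induction F using Finset.induction_on with
  | empty => simp [hp.1]
  | insert a F hnotmem ih =>
    rw [Finset.sup_insert]
    simp only [id]
    rw [hp.2.2.2, Bool.or_eq_true, ih]
    simp

lemma gamma_point {a : L} (ha : CoprimeElt a) : IsPoint (gammaPt a) := by
  refine ⟨?_, ?_, ?_, ?_⟩
  · simp only [gammaPt]
    rw [decide_eq_false_iff_not]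
    intro h
    exact ha.1 (le_bot_iff.mp h)
  · simp [gammaPt]
  · intro x y
    simp only [gammaPt]
    by_cases hx : a ≤ x <;> by_cases hy : a ≤ y <;>
      simp [hx, hy, le_inf_iff]
  · intro x y
    simp only [gammaPt]
    by_cases hx : a ≤ x <;> by_cases hy : a ≤ y
    · simp [hx, hy, le_sup_of_le_left hx]
    · simp [hx, hy, le_sup_of_le_left hx]
    · simp [hx, hy, le_sup_of_le_right hy]
    · have : ¬ a ≤ x ⊔ y := fun h => (ha.2 x y h).elim hx hy
      simp [hx, hy, this]

lemma gamma_le_iff {a : L} {q : Pt L} (hg : IsPoint (gammaPt a)) :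
    (⟨gammaPt a, hg⟩ : Pt L) ≤ q ↔ q.1 a = true := by
  refine (pt_le_iff _ _).trans ?_
  constructor
  · intro h
    exact h a (by simp [gammaPt])
  · intro h x hx
    have hax : a ≤ x := by simpa [gammaPt] using hx
    exact point_mono q.2 hax h

/-- Directed sups in `Pt L` are computed pointwise. -/
lemma lub_eval {D : Set (Pt L)} (hne : D.Nonempty) (hdir : DirectedOn (· ≤ ·) D)
    {s : Pt L} (hs : IsLUB D s) (x : L) :
    s.1 x = true ↔ ∃ p ∈ D, p.1 x = true := by
  classical
  set q : L → Bool := fun x => decide (∃ p ∈ D, p.1 x = true) with hq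
  have hqpt : IsPoint q := by
    refine ⟨?_, ?_, ?_, ?_⟩
    · simp only [hq, decide_eq_false_iff_not]
      rintro ⟨p, _, hp⟩
      rw [p.2.1] at hp; exact Bool.false_ne_true hp
    · obtain ⟨p, hp⟩ := hne
      simp only [hq, decide_eq_true_iff]
      exact ⟨p, hp, p.2.2.1⟩
    · intro x y
      simp only [hq]
      by_cases hx : ∃ p ∈ D, p.1 x = true
      · by_cases hy : ∃ p ∈ D, p.1 y = true
        · obtain ⟨p1, hp1, hpx⟩ := hx
          obtain ⟨p2, hp2, hpy⟩ := hy
          obtain ⟨p3, hp3, h13, h23⟩ := hdir p1 hp1 p2 hp2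
          have hx3 := (pt_le_iff _ _).mp h13 x hpx
          have hy3 := (pt_le_iff _ _).mp h23 y hpy
          have : p3.1 (x ⊓ y) = true := by
            rw [p3.2.2.2.1, hx3, hy3]; rfl
          have h1 : ∃ p ∈ D, p.1 (x ⊓ y) = true := ⟨p3, hp3, this⟩
          have h2 : ∃ p ∈ D, p.1 x = true := ⟨p1, hp1, hpx⟩
          have h3 : ∃ p ∈ D, p.1 y = true := ⟨p2, hp2, hpy⟩
          simp [h1, h2, h3]
        · have hxy : ¬ ∃ p ∈ D, p.1 (x ⊓ y) = true := by
            rintro ⟨p, hp, hpxy⟩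
            refine hy ⟨p, hp, ?_⟩
            exact point_mono p.2 inf_le_right hpxy
          simp [hxy, hy]
      · have hxy : ¬ ∃ p ∈ D, p.1 (x ⊓ y) = true := by
          rintro ⟨p, hp, hpxy⟩
          refine hx ⟨p, hp, ?_⟩
          exact point_mono p.2 inf_le_left hpxy
        simp [hxy, hx]
    · intro x y
      simp only [hq]
      by_cases hxy : ∃ p ∈ D, p.1 (x ⊔ y) = true
      · obtain ⟨p, hp, hpxy⟩ := hxy
        rw [p.2.2.2.2, Bool.or_eq_true] at hpxy
        rcases hpxy with h | h
        · have h1 : ∃ p ∈ D, p.1 x = true := ⟨p, hp, h⟩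
          have h2 : ∃ p ∈ D, p.1 (x ⊔ y) = true :=
            ⟨p, hp, point_mono p.2 le_sup_left h⟩
          simp [h1, h2]
        · have h1 : ∃ p ∈ D, p.1 y = true := ⟨p, hp, h⟩
          have h2 : ∃ p ∈ D, p.1 (x ⊔ y) = true :=
            ⟨p, hp, point_mono p.2 le_sup_right h⟩
          simp [h1, h2]
      · have hx : ¬ ∃ p ∈ D, p.1 x = true := by
          rintro ⟨p, hp, h⟩
          exact hxy ⟨p, hp, point_mono p.2 le_sup_left h⟩
        have hy : ¬ ∃ p ∈ D, p.1 y = true := by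
          rintro ⟨p, hp, h⟩
          exact hxy ⟨p, hp, point_mono p.2 le_sup_right h⟩
        simp [hx, hy, hxy]
  have hlub : IsLUB D (⟨q, hqpt⟩ : Pt L) := by
    constructor
    · intro p hp
      apply (pt_le_iff _ _).mpr
      intro x hx
      simp only [hq, decide_eq_true_iff]
      exact ⟨p, hp, hx⟩
    · intro u hu
      apply (pt_le_iff _ _).mpr
      intro x hx
      simp only [hq, decide_eq_true_iff] at hx
      obtain ⟨p, hp, hpx⟩ := hx
      exact (pt_le_iff _ _).mp (hu hp) x hpx
  have : s = ⟨q, hqpt⟩ := hs.unique hlub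
  rw [this]
  simp [hq]

/-- The basic subsets `Φ a = {p | p a = 1}` are Scott-open. -/
lemma phi_scottOpen (a : L) : ScottOpen {p : Pt L | p.1 a = true} := by
  constructor
  · intro p q hpq hp
    exact (pt_le_iff p q).mp hpq a hp
  · intro D hne hdir s hs hsU
    have := (lub_eval hne hdir hs a).mp hsU
    obtain ⟨p, hp, hpa⟩ := this
    exact ⟨p, hp, hpa⟩

end Helpers

section DomainHelpers

variable {P : Type*} [PartialOrder P]

lemma Ici_scottCompact (p : P) : ScottCompactSet (Set.Ici p) := by
  intro C hC hcov
  obtain ⟨V, hV, hpV⟩ := hcov (Set.mem_Ici.mpr le_rfl)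
  refine ⟨{V}, by simpa using hV, ?_⟩
  intro q hq
  exact ⟨V, by simp, (hC V hV).1 (Set.mem_Ici.mp hq) hpV⟩

lemma scottCompact_biUnion {ι : Type*} (F : Finset ι) (S : ι → Set P)
    (h : ∀ i ∈ F, ScottCompactSet (S i)) :
    ScottCompactSet (⋃ i ∈ F, S i) := by
  classical
  intro C hC hcov
  have : ∀ i ∈ F, ∃ G : Finset (Set P), ↑G ⊆ C ∧ S i ⊆ ⋃₀ (G : Set (Set P)) := by
    intro i hi
    exact h i hi C hC (fun x hx => hcov (Set.mem_biUnion hi hx))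
  choose G hG1 hG2 using this
  refine ⟨F.attach.biUnion (fun i => G i.1 i.2), ?_, ?_⟩
  · intro V hV
    simp only [Finset.coe_biUnion, Set.mem_iUnion, Finset.mem_coe] at hV
    obtain ⟨i, hi, hVi⟩ := hV
    exact hG1 i.1 i.2 hVi
  · intro x hx
    simp only [Set.mem_iUnion] at hx
    obtain ⟨i, hi, hxi⟩ := hx
    obtain ⟨V, hV, hxV⟩ := hG2 i hi hxi
    refine ⟨V, ?_, hxV⟩
    simp only [Finset.coe_biUnion, Set.mem_iUnion, Finset.mem_coe]
    exact ⟨⟨i, hi⟩, Finset.mem_attach _ _, hV⟩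

lemma scottOpen_biUnion {ι : Type*} (T : Set ι) (S : ι → Set P)
    (h : ∀ i ∈ T, ScottOpen (S i)) : ScottOpen (⋃ i ∈ T, S i) := by
  constructor
  · intro x y hxy hx
    simp only [Set.mem_iUnion] at *
    obtain ⟨i, hi, hxi⟩ := hx
    exact ⟨i, hi, (h i hi).1 hxy hxi⟩
  · intro D hne hdir s hs hsU
    simp only [Set.mem_iUnion] at hsU
    obtain ⟨i, hi, hsi⟩ := hsU
    obtain ⟨d, hd, hdi⟩ := (h i hi).2 D hne hdir s hs hsi
    refine ⟨d, hd, ?_⟩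
    simp only [Set.mem_iUnion]
    exact ⟨i, hi, hdi⟩

end DomainHelpers

section FDDHelpers

variable {L : Type*} [DistribLattice L] [BoundedOrder L]

/-- `Φ a` is Scott-compact in an FDD lattice. -/
lemma phi_scottCompact (hL : IsFDD L) (a : L) :
    ScottCompactSet {p : Pt L | p.1 a = true} := by
  classical
  obtain ⟨F, hFcp, hFsup⟩ := hL.1 a
  have key : {p : Pt L | p.1 a = true} =
      ⋃ b ∈ F.attach, Set.Ici (⟨gammaPt b.1, gamma_point (hFcp b.1 b.2)⟩ : Pt L) := by
    ext p
    simp only [Set.mem_setOf_eq, Set.mem_iUnion, Set.mem_Ici, Finset.mem_attach,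
      exists_true_left]
    rw [hFsup, point_sup_finset p.2]
    constructor
    · rintro ⟨b, hb, hpb⟩
      exact Set.mem_iUnion.mpr ⟨⟨b, hb⟩, Set.mem_iUnion.mpr ⟨trivial, (gamma_le_iff _).mpr hpb⟩⟩
    · intro h
      obtain ⟨b, h⟩ := Set.mem_iUnion.mp h
      obtain ⟨_, hb⟩ := Set.mem_iUnion.mp h
      exact ⟨b.1, b.2, (gamma_le_iff _).mp hb⟩
  rw [key]
  exact scottCompact_biUnion _ _ (fun b _ => Ici_scottCompact _)

/-- Approximation: every member of a Scott-open set lies in a basic set inside it. -/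
lemma approx (hL : IsFDD L) {U : Set (Pt L)} (hU : ScottOpen U) {p : Pt L} (hp : p ∈ U) :
    ∃ a : L, CoprimeElt a ∧ p.1 a = true ∧ {q : Pt L | q.1 a = true} ⊆ U := by
  classical
  set D : Set (Pt L) := {q | ∃ a : L, CoprimeElt a ∧ p.1 a = true ∧ q.1 = gammaPt a} with hD
  have hne : D.Nonempty := by
    obtain ⟨F, hFcp, hFsup⟩ := hL.1 ⊤
    have htop : p.1 (F.sup id) = true := by rw [← hFsup]; exact p.2.2.1
    obtain ⟨b, hb, hpb⟩ := (point_sup_finset p.2 F).mp htop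
    exact ⟨⟨gammaPt b, gamma_point (hFcp b hb)⟩, b, hFcp b hb, hpb, rfl⟩
  have hdir : DirectedOn (· ≤ ·) D := by
    rintro q1 ⟨a, ha, hpa, hq1⟩ q2 ⟨b, hb, hpb, hq2⟩
    obtain ⟨G, hGcp, _, hGsup⟩ := hL.2 a b ha hb
    have hpab : p.1 (G.sup id) = true := by
      rw [← hGsup, p.2.2.2.1, hpa, hpb]; rfl
    obtain ⟨c, hc, hpc⟩ := (point_sup_finset p.2 G).mp hpab
    have hcab : c ≤ a ⊓ b := hGsup ▸ Finset.le_sup (f := id) hc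
    refine ⟨⟨gammaPt c, gamma_point (hGcp c hc)⟩, ⟨c, hGcp c hc, hpc, rfl⟩, ?_, ?_⟩
    · apply (pt_le_iff _ _).mpr
      intro x hx
      rw [hq1] at hx
      have hax : a ≤ x := by simpa [gammaPt] using hx
      have : c ≤ x := le_trans (le_trans hcab inf_le_left) hax
      simp [gammaPt, this]
    · apply (pt_le_iff _ _).mpr
      intro x hx
      rw [hq2] at hx
      have hbx : b ≤ x := by simpa [gammaPt] using hx
      have : c ≤ x := le_trans (le_trans hcab inf_le_right) hbx
      simp [gammaPt, this]
  have hlub : IsLUB D p := by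
    constructor
    · rintro q ⟨a, ha, hpa, hq⟩
      rw [pt_le_iff]
      intro x hx
      rw [hq] at hx
      have hax : a ≤ x := by simpa [gammaPt] using hx
      exact point_mono p.2 hax hpa
    · intro u hu
      rw [pt_le_iff]
      intro x hx
      obtain ⟨F, hFcp, hFsup⟩ := hL.1 x
      rw [hFsup] at hx
      obtain ⟨b, hb, hpb⟩ := (point_sup_finset p.2 F).mp hx
      have hmem : (⟨gammaPt b, gamma_point (hFcp b hb)⟩ : Pt L) ∈ D :=
        ⟨b, hFcp b hb, hpb, rfl⟩
      have hle := (pt_le_iff _ u).mp (hu hmem)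
      have hub : u.1 b = true := hle b (by simp [gammaPt])
      have hbx : b ≤ x := hFsup ▸ Finset.le_sup (f := id) hb
      exact point_mono u.2 hbx hub
  obtain ⟨q, hqD, hqU⟩ := hU.2 D hne hdir p hlub hp
  obtain ⟨a, ha, hpa, hq⟩ := hqD
  refine ⟨a, ha, hpa, ?_⟩
  intro r hr
  have hqr : q ≤ r := by
    rw [pt_le_iff]
    intro x hx
    rw [hq] at hx
    have hax : a ≤ x := by simpa [gammaPt] using hx
    exact point_mono r.2 hax hr
  exact hU.1 hqr hqU

end FDDHelpers

/-- For a bounded lattice homomorphism `f : L → M` between FDD-lattices,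
`pt f : Pt M → Pt L`, `p ↦ p ∘ f`, is a well-defined spectral map between the Lawson
compact algebraic L-domains `Pt M` and `Pt L`: preimages of compact-open subsets are
compact-open. -/
theorem stmt16 {L M : Type*} [DistribLattice L] [BoundedOrder L]
    [DistribLattice M] [BoundedOrder M]
    (hL : IsFDD L) (hM : IsFDD M) (f : L → M) (hf : IsBLH f) :
    (∀ p : Pt M, IsPoint (p.1 ∘ f)) ∧
    (∀ g : Pt M → Pt L, (∀ p : Pt M, (g p).1 = p.1 ∘ f) →
      ∀ U ∈ CO (Pt L), g ⁻¹' U ∈ CO (Pt M)) := by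
  classical
  obtain ⟨hfb, hft, hfm, hfj⟩ := hf
  constructor
  · intro p
    obtain ⟨pb, pt', pm, pj⟩ := p.2
    refine ⟨?_, ?_, ?_, ?_⟩
    · simp [Function.comp, hfb, pb]
    · simp [Function.comp, hft, pt']
    · intro x y; simp [Function.comp, hfm, pm]
    · intro x y; simp [Function.comp, hfj, pj]
  · intro g hg U hUco
    obtain ⟨hUo, hUc⟩ := hUco
    set C : Set (Set (Pt L)) :=
      {V | ∃ a : L, CoprimeElt a ∧ V = {q : Pt L | q.1 a = true} ∧ V ⊆ U} with hC
    have hCopen : ∀ V ∈ C, ScottOpen V := by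
      rintro V ⟨a, _, rfl, _⟩
      exact phi_scottOpen a
    have hcov : U ⊆ ⋃₀ C := by
      intro p hp
      obtain ⟨a, ha, hpa, hsub⟩ := approx hL hUo hp
      exact ⟨_, ⟨a, ha, rfl, hsub⟩, hpa⟩
    obtain ⟨Fs, hFs, hUF⟩ := hUc C hCopen hcov
    have hch : ∀ V ∈ Fs, ∃ a : L, V = {q : Pt L | q.1 a = true} ∧ V ⊆ U := by
      intro V hV
      obtain ⟨a, _, h1, h2⟩ := hFs hV
      exact ⟨a, h1, h2⟩
    choose aV haV hVU using hch
    have hpre : g ⁻¹' U =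
        ⋃ V ∈ Fs.attach, {p : Pt M | p.1 (f (aV V.1 V.2)) = true} := by
      ext p
      simp only [Set.mem_preimage, Set.mem_iUnion, Set.mem_setOf_eq, Finset.mem_attach,
        exists_true_left]
      constructor
      · intro hpU
        obtain ⟨V, hVFs, hpV⟩ := hUF hpU
        have hVFs' : V ∈ Fs := hVFs
        have : g p ∈ {q : Pt L | q.1 (aV V hVFs') = true} := (haV V hVFs') ▸ hpV
        refine ⟨⟨V, hVFs'⟩, ?_⟩
        have := Set.mem_setOf_eq ▸ this
        rw [hg p] at this
        exact this
      · rintro ⟨V, hpV⟩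
        have : (g p).1 (aV V.1 V.2) = true := by
          rw [hg p]; exact hpV
        exact hVU V.1 V.2 ((haV V.1 V.2) ▸ (Set.mem_setOf_eq ▸ this))
    rw [hpre]
    constructor
    · exact scottOpen_biUnion _ _ (fun V _ => phi_scottOpen _)
    · exact scottCompact_biUnion _ _ (fun V _ => phi_scottCompact hM _)
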